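/- Let x_0 = (1/3, 1/3, …, 1/3) ∈ ℝ^9, let X^{(iii)} ⊆ ℝ^9 be the set of the 72 vectors having one coordinate equal to 4/3, seven coordinates equal to 1/3, and one coordinate equal to −2/3, and let X^{(iii)}' = {(x_1,…,x_9) ∈ X^{(iii)} : x_i = 4/3 and x_j = −2/3 with i > j} (36 vectors, those in which the coordinate 4/3 occurs at a later position than the coordinate −2/3). Then J̃(9,3) ∪ {x_0} ∪ X^{(iii)}' is a maximal three-distance set in H(9,3) with exactly 121 points; moreover, every maximal three-distance set in H(9,3) containing J̃(9,3) has exactly 121 points. -/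

import Mathlib

noncomputable section

/-- The set of distances between distinct points of `S`. -/
def distSet {n : ℕ} (S : Set (EuclideanSpace ℝ (Fin n))) : Set ℝ :=
  {d | ∃ x ∈ S, ∃ y ∈ S, x ≠ y ∧ d = dist x y}

/-- `S` is an `s`-distance set: exactly `s` distances occur between distinct points. -/
def IsSDistanceSet {n : ℕ} (s : ℕ) (S : Set (EuclideanSpace ℝ (Fin n))) : Prop :=
  (distSet S).Finite ∧ (distSet S).ncard = s

/-- The representation `J̃(n,m)` of the Johnson graph `J(n,m)`: vectors with exactly `m`
coordinates equal to `1` and the rest equal to `0`. -/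
def JohnsonRep (n m : ℕ) : Set (EuclideanSpace ℝ (Fin n)) :=
  {x | (∀ i, x i = 0 ∨ x i = 1) ∧ {i : Fin n | x i = 1}.ncard = m}

/-- The hyperplane `H(n,m) = {x : ∑ x_i = m}`. -/
def Hyp (n m : ℕ) : Set (EuclideanSpace ℝ (Fin n)) :=
  {x | ∑ i, x i = (m : ℝ)}

/-- The set `X⁽ⁱⁱⁱ⁾ = (4/3, (1/3)^7, -2/3)^P ⊆ ℝ⁹`. -/
def X93 : Set (EuclideanSpace ℝ (Fin 9)) :=
  {y | {i : Fin 9 | y i = 4/3}.ncard = 1 ∧ {i : Fin 9 | y i = 1/3}.ncard = 7 ∧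
    {i : Fin 9 | y i = -2/3}.ncard = 1}

/-- `X⁽ⁱⁱⁱ⁾' ⊆ X⁽ⁱⁱⁱ⁾`: the 36 vectors in which the coordinate `4/3` occurs at a later
position than the coordinate `-2/3`. -/
def X93' : Set (EuclideanSpace ℝ (Fin 9)) :=
  {y ∈ X93 | ∃ i j : Fin 9, (j : ℕ) < (i : ℕ) ∧ y i = 4/3 ∧ y j = -2/3}

abbrev E9 := EuclideanSpace ℝ (Fin 9)

def chi (A : Finset (Fin 9)) (k : Fin 9) : ℝ := if k ∈ A then 1 else 0
def eA (A : Finset (Fin 9)) : E9 := WithLp.toLp 2 (fun k => chi A k)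
def vv (i j : Fin 9) : E9 := WithLp.toLp 2 (fun k => if k = i then (4/3 : ℝ) else if k = j then -2/3 else 1/3)
def pt3 : E9 := WithLp.toLp 2 (fun _ => (1/3 : ℝ))

lemma dist_sq (x y : E9) : dist x y ^ 2 = ∑ i, (x i - y i)^2 := by
  rw [EuclideanSpace.dist_eq, Real.sq_sqrt (by positivity)]
  congr 1; ext i; rw [Real.dist_eq, sq_abs]

lemma sum_chi (A : Finset (Fin 9)) : ∑ k, chi A k = A.card := by
  simp [chi, Finset.sum_ite_mem]

lemma sum_dd (i : Fin 9) (f : Fin 9 → ℝ) : ∑ k, (if k = i then f k else 0) = f i := by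
  simp [Finset.sum_ite_eq']

lemma sum2' (i j : Fin 9) (hij : i ≠ j) (a b : ℝ) :
    ∑ k : Fin 9, (if k = i then a else if k = j then b else 0) = a + b := by
  have h : ∀ k : Fin 9, (if k = i then a else if k = j then b else 0)
      = (if k = i then a else 0) + (if k = j then b else 0) := by
    intro k; by_cases h1 : k = i <;> by_cases h2 : k = j <;> simp_all
  simp [h, Finset.sum_add_distrib, sum_dd]

lemma sum3' (i j l : Fin 9) (hij : i ≠ j) (hil : i ≠ l) (hjl : j ≠ l) (a b c : ℝ) :
    ∑ k : Fin 9, (if k = i then a else if k = j then b else if k = l then c else 0)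
      = a + b + c := by
  have h : ∀ k : Fin 9, (if k = i then a else if k = j then b else if k = l then c else 0)
      = (if k = i then a else 0) + (if k = j then b else 0) + (if k = l then c else 0) := by
    intro k; by_cases h1 : k = i <;> by_cases h2 : k = j <;> by_cases h3 : k = l <;> simp_all
  simp [h, Finset.sum_add_distrib, sum_dd]

lemma sum4' (i j l m : Fin 9) (hij : i ≠ j) (hil : i ≠ l) (him : i ≠ m) (hjl : j ≠ l)
    (hjm : j ≠ m) (hlm : l ≠ m) (a b c d : ℝ) :
    ∑ k : Fin 9, (if k = i then a else if k = j then b else if k = l then c else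
      if k = m then d else 0) = a + b + c + d := by
  have h : ∀ k : Fin 9, (if k = i then a else if k = j then b else if k = l then c else
      if k = m then d else 0)
      = (if k = i then a else 0) + (if k = j then b else 0) + (if k = l then c else 0)
        + (if k = m then d else 0) := by
    intro k; by_cases h1 : k = i <;> by_cases h2 : k = j <;> by_cases h3 : k = l <;>
      by_cases h4 : k = m <;> simp_all
  simp [h, Finset.sum_add_distrib, sum_dd]

lemma sum9 (i j : Fin 9) (hij : i ≠ j) (a b c : ℝ) :
    ∑ k : Fin 9, (if k = i then a else if k = j then b else c) = a + b + 7*c := by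
  have h : ∀ k : Fin 9, (if k = i then a else if k = j then b else c)
      = c + (if k = i then a - c else 0) + (if k = j then b - c else 0) := by
    intro k; by_cases h1 : k = i <;> by_cases h2 : k = j <;> simp_all
  simp only [h, Finset.sum_add_distrib, sum_dd, Finset.sum_const, Finset.card_univ,
    Fintype.card_fin]
  ring

-- distance computations
lemma dJJ (A B : Finset (Fin 9)) (hA : A.card = 3) (hB : B.card = 3) :
    dist (eA A) (eA B) ^ 2 = 6 - 2 * ((A ∩ B).card : ℝ) := by
  rw [dist_sq]
  have h : ∀ k, (eA A k - eA B k)^2 = chi A k + chi B k - 2 * chi (A ∩ B) k := by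
    intro k
    by_cases h1 : k ∈ A <;> by_cases h2 : k ∈ B <;>
      simp_all [eA, chi, Finset.mem_inter] <;> norm_num
  simp only [h, Finset.sum_sub_distrib, Finset.sum_add_distrib, ← Finset.mul_sum, sum_chi,
    hA, hB]
  push_cast; ring

lemma dJpt3 (A : Finset (Fin 9)) (hA : A.card = 3) : dist (eA A) pt3 ^ 2 = 2 := by
  rw [dist_sq]
  have h : ∀ k, (eA A k - pt3 k)^2 = (1/3) * chi A k + 1/9 := by
    intro k
    by_cases h1 : k ∈ A <;> simp_all [eA, chi, pt3] <;> norm_num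
  simp only [h, Finset.sum_add_distrib, ← Finset.mul_sum, sum_chi, hA, Finset.sum_const,
    Finset.card_univ, Fintype.card_fin]
  norm_num

lemma dpt3v (i j : Fin 9) (hij : i ≠ j) : dist pt3 (vv i j) ^ 2 = 2 := by
  rw [dist_sq]
  have h : ∀ k, (pt3 k - vv i j k)^2 = (if k = i then (1:ℝ) else if k = j then 1 else 0) := by
    intro k
    by_cases h1 : k = i <;> by_cases h2 : k = j <;> simp_all [pt3, vv] <;> norm_num
  rw [Finset.sum_congr rfl fun k _ => h k, sum2' i j hij]; norm_num

lemma dJv (A : Finset (Fin 9)) (hA : A.card = 3) (i j : Fin 9) (hij : i ≠ j) :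
    dist (eA A) (vv i j) ^ 2 = 4 - 2 * chi A i + 2 * chi A j := by
  rw [dist_sq]
  have h : ∀ k, (eA A k - vv i j k)^2 = (1/3) * chi A k + 1/9
      + (if k = i then (5/3 - 2 * chi A k) else 0) + (if k = j then (2 * chi A k + 1/3) else 0) := by
    intro k
    by_cases h1 : k = i <;> by_cases h2 : k = j <;> by_cases h3 : k ∈ A <;>
      simp_all [eA, chi, vv] <;> norm_num
  simp only [h, Finset.sum_add_distrib, ← Finset.mul_sum, sum_chi, hA, sum_dd,
    Finset.sum_const, Finset.card_univ, Fintype.card_fin]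
  norm_num; ring

lemma dvv_same_i (i j j' : Fin 9) (hij : i ≠ j) (hij' : i ≠ j') (hjj' : j ≠ j') :
    dist (vv i j) (vv i j') ^ 2 = 2 := by
  rw [dist_sq]
  have h : ∀ k, (vv i j k - vv i j' k)^2 = (if k = j then (1:ℝ) else if k = j' then 1 else 0) := by
    intro k
    by_cases h1 : k = i <;> by_cases h2 : k = j <;> by_cases h3 : k = j' <;>
      simp_all [vv] <;> norm_num
  rw [Finset.sum_congr rfl fun k _ => h k, sum2' j j' hjj']; norm_num

lemma dvv_same_j (i i' j : Fin 9) (hij : i ≠ j) (hi'j : i' ≠ j) (hii' : i ≠ i') :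
    dist (vv i j) (vv i' j) ^ 2 = 2 := by
  rw [dist_sq]
  have h : ∀ k, (vv i j k - vv i' j k)^2 = (if k = i then (1:ℝ) else if k = i' then 1 else 0) := by
    intro k
    by_cases h1 : k = i <;> by_cases h2 : k = i' <;> by_cases h3 : k = j <;>
      simp_all [vv] <;> norm_num
  rw [Finset.sum_congr rfl fun k _ => h k, sum2' i i' hii']; norm_num

lemma dvv_swap (i j : Fin 9) (hij : i ≠ j) :
    dist (vv i j) (vv j i) ^ 2 = 8 := by
  rw [dist_sq]
  have h : ∀ k, (vv i j k - vv j i k)^2 = (if k = i then (4:ℝ) else if k = j then 4 else 0) := by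
    intro k
    by_cases h1 : k = i <;> by_cases h2 : k = j <;> simp_all [vv] <;> norm_num
  rw [Finset.sum_congr rfl fun k _ => h k, sum2' i j hij]; norm_num

lemma dvv_c5 (i j i' : Fin 9) (hij : i ≠ j) (hi'i : i' ≠ i) (hi'j : i' ≠ j) :
    dist (vv i j) (vv i' i) ^ 2 = 6 := by
  rw [dist_sq]
  have h : ∀ k, (vv i j k - vv i' i k)^2
      = (if k = i then (4:ℝ) else if k = j then 1 else if k = i' then 1 else 0) := by
    intro k
    by_cases h1 : k = i <;> by_cases h2 : k = j <;> by_cases h3 : k = i' <;>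
      simp_all [vv] <;> norm_num
  rw [Finset.sum_congr rfl fun k _ => h k, sum3' i j i' hij (Ne.symm hi'i) (Ne.symm hi'j)]
  norm_num

lemma dvv_c6 (i j j' : Fin 9) (hij : i ≠ j) (hj'i : j' ≠ i) (hj'j : j' ≠ j) :
    dist (vv i j) (vv j j') ^ 2 = 6 := by
  rw [dist_sq]
  have h : ∀ k, (vv i j k - vv j j' k)^2
      = (if k = i then (1:ℝ) else if k = j then 4 else if k = j' then 1 else 0) := by
    intro k
    by_cases h1 : k = i <;> by_cases h2 : k = j <;> by_cases h3 : k = j' <;>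
      simp_all [vv] <;> norm_num
  rw [Finset.sum_congr rfl fun k _ => h k, sum3' i j j' hij (Ne.symm hj'i) (Ne.symm hj'j)]
  norm_num

lemma dvv_gen (i j i' j' : Fin 9) (h1 : i ≠ j) (h2 : i ≠ i') (h3 : i ≠ j') (h4 : j ≠ i')
    (h5 : j ≠ j') (h6 : i' ≠ j') :
    dist (vv i j) (vv i' j') ^ 2 = 4 := by
  rw [dist_sq]
  have h : ∀ k, (vv i j k - vv i' j' k)^2
      = (if k = i then (1:ℝ) else if k = j then 1 else if k = i' then 1 else
          if k = j' then 1 else 0) := by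
    intro k
    by_cases g1 : k = i <;> by_cases g2 : k = j <;> by_cases g3 : k = i' <;>
      by_cases g4 : k = j' <;> simp_all [vv] <;> norm_num
  rw [Finset.sum_congr rfl fun k _ => h k, sum4' i j i' j' h1 h2 h3 h4 h5 h6]
  norm_num

lemma vv_apply_i (i j : Fin 9) : vv i j i = 4/3 := by simp [vv]
lemma vv_apply_j (i j : Fin 9) (hij : i ≠ j) : vv i j j = -2/3 := by
  simp [vv, Ne.symm hij]
lemma vv_apply_other (i j k : Fin 9) (hki : k ≠ i) (hkj : k ≠ j) : vv i j k = 1/3 := by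
  simp [vv, hki, hkj]

lemma vv_eq_43 (i j k : Fin 9) (hij : i ≠ j) : vv i j k = 4/3 ↔ k = i := by
  unfold vv; simp only [PiLp.toLp_apply]
  by_cases h1 : k = i
  · simp [h1]
  · rw [if_neg h1]
    by_cases h2 : k = j
    · rw [if_pos h2]; simp [h1]; norm_num
    · rw [if_neg h2]; simp [h1]; norm_num

lemma vv_eq_m23 (i j k : Fin 9) (hij : i ≠ j) : vv i j k = -2/3 ↔ k = j := by
  unfold vv; simp only [PiLp.toLp_apply]
  by_cases h1 : k = i
  · have h2 : ¬ k = j := by rw [h1]; exact hij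
    rw [if_pos h1]; simp [h2]; norm_num
  · rw [if_neg h1]
    by_cases h2 : k = j
    · simp [h2]
    · rw [if_neg h2]; simp [h2]; norm_num

lemma vv_inj (i j i' j' : Fin 9) (hij : i ≠ j) (hij' : i' ≠ j') (h : vv i j = vv i' j') :
    i = i' ∧ j = j' := by
  constructor
  · have := congrFun (congrArg WithLp.ofLp h) i
    rw [vv_apply_i] at this
    exact ((vv_eq_43 i' j' i hij').mp this.symm)
  · have := congrFun (congrArg WithLp.ofLp h) j
    rw [vv_apply_j i j hij] at this
    exact ((vv_eq_m23 i' j' j hij').mp this.symm)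

lemma mem_J_iff (x : E9) : x ∈ JohnsonRep 9 3 ↔ ∃ A : Finset (Fin 9), A.card = 3 ∧ x = eA A := by
  constructor
  · rintro ⟨h01, hcard⟩
    classical
    refine ⟨Finset.univ.filter (fun i => x i = 1), ?_, ?_⟩
    · rw [← hcard]
      have : {i : Fin 9 | x i = 1} = ↑(Finset.univ.filter (fun i => x i = 1)) := by
        ext i; simp
      rw [this, Set.ncard_coe_finset]
    · ext k
      rcases h01 k with h | h <;> simp [eA, chi, h]
  · rintro ⟨A, hA, rfl⟩
    constructor
    · intro i; by_cases h : i ∈ A <;> simp [eA, chi, h]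
    · have : {i : Fin 9 | eA A i = 1} = ↑A := by
        ext i; by_cases h : i ∈ A <;> simp [eA, chi, h]
      rw [this, Set.ncard_coe_finset, hA]

lemma mem_X93_iff (y : E9) : y ∈ X93 ↔ ∃ i j : Fin 9, i ≠ j ∧ y = vv i j := by
  constructor
  · rintro ⟨h4, h1, hm⟩
    obtain ⟨i, hi⟩ := Set.ncard_eq_one.mp h4
    obtain ⟨j, hj⟩ := Set.ncard_eq_one.mp hm
    have hyi : y i = 4/3 := by
      have : i ∈ {k : Fin 9 | y k = 4/3} := hi ▸ rfl
      exact this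
    have hyj : y j = -2/3 := by
      have : j ∈ {k : Fin 9 | y k = -2/3} := hj ▸ rfl
      exact this
    have hij : i ≠ j := by
      intro h; rw [h] at hyi; rw [hyi] at hyj; norm_num at hyj
    refine ⟨i, j, hij, ?_⟩
    -- coverage: the three sets cover everything
    classical
    have hcov : {k : Fin 9 | y k = 4/3} ∪ {k : Fin 9 | y k = 1/3} ∪ {k : Fin 9 | y k = -2/3}
        = Set.univ := by
      apply Set.eq_of_subset_of_ncard_le (Set.subset_univ _)
      rw [Set.ncard_univ]
      simp only [Nat.card_eq_fintype_card, Fintype.card_fin]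
      have hd1 : Disjoint {k : Fin 9 | y k = 4/3} {k : Fin 9 | y k = 1/3} := by
        rw [Set.disjoint_left]; intro a ha ha'; simp at ha ha'; rw [ha] at ha'; norm_num at ha'
      have hd2 : Disjoint ({k : Fin 9 | y k = 4/3} ∪ {k : Fin 9 | y k = 1/3})
          {k : Fin 9 | y k = -2/3} := by
        rw [Set.disjoint_left]; rintro a (ha | ha) ha' <;> simp at ha ha' <;>
          rw [ha] at ha' <;> norm_num at ha'
      rw [Set.ncard_union_eq hd2 (Set.Finite.union (Set.toFinite _) (Set.toFinite _))
        (Set.toFinite _), Set.ncard_union_eq hd1 (Set.toFinite _) (Set.toFinite _),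
        h4, h1, hm]
    ext k
    by_cases hki : k = i
    · rw [hki, hyi]; exact (vv_apply_i i j).symm
    · by_cases hkj : k = j
      · rw [hkj, hyj]; exact (vv_apply_j i j hij).symm
      · have hk : k ∈ {k : Fin 9 | y k = 4/3} ∪ {k : Fin 9 | y k = 1/3} ∪ {k : Fin 9 | y k = -2/3} := by
          rw [hcov]; trivial
        rcases hk with (hk | hk) | hk
        · exact absurd (hi ▸ hk : k ∈ ({i} : Set (Fin 9))) hki
        · rw [Set.mem_setOf_eq.mp hk]; exact (vv_apply_other i j k hki hkj).symm
        · exact absurd (hj ▸ hk : k ∈ ({j} : Set (Fin 9))) hkj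
  · rintro ⟨i, j, hij, rfl⟩
    refine ⟨?_, ?_, ?_⟩
    · have : {k : Fin 9 | vv i j k = 4/3} = {i} := by
        ext k; simp [vv_eq_43 i j k hij]
      rw [this, Set.ncard_singleton]
    · have : {k : Fin 9 | vv i j k = 1/3} = ↑((Finset.univ : Finset (Fin 9)) \ {i, j}) := by
        ext k
        simp only [Set.mem_setOf_eq, Finset.coe_sdiff, Set.mem_diff, Finset.coe_univ,
          Set.mem_univ, true_and, Finset.coe_insert, Finset.coe_singleton, Set.mem_insert_iff,
          Set.mem_singleton_iff]
        constructor
        · intro h hk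
          rcases hk with rfl | rfl
          · rw [vv_apply_i] at h; norm_num at h
          · rw [vv_apply_j _ _ hij] at h; norm_num at h
        · intro hk
          push_neg at hk
          exact vv_apply_other i j k hk.1 hk.2
      rw [this, Set.ncard_coe_finset, Finset.card_sdiff_of_subset (Finset.subset_univ _)]
      rw [Finset.card_insert_of_notMem (by simp [hij]), Finset.card_singleton]
      simp
    · have : {k : Fin 9 | vv i j k = -2/3} = {j} := by
        ext k; simp [vv_eq_m23 i j k hij]
      rw [this, Set.ncard_singleton]

lemma mem_X93'_iff (y : E9) : y ∈ X93' ↔ ∃ i j : Fin 9, (j : ℕ) < (i : ℕ) ∧ y = vv i j := by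
  constructor
  · rintro ⟨hy, i', j', hlt, h4, hm⟩
    obtain ⟨i, j, hij, rfl⟩ := (mem_X93_iff y).mp hy
    have hi : i' = i := (vv_eq_43 i j i' hij).mp h4
    have hj : j' = j := (vv_eq_m23 i j j' hij).mp hm
    exact ⟨i, j, hi ▸ hj ▸ hlt, rfl⟩
  · rintro ⟨i, j, hlt, rfl⟩
    have hij : i ≠ j := by
      intro h; rw [h] at hlt; exact lt_irrefl _ hlt
    exact ⟨(mem_X93_iff _).mpr ⟨i, j, hij, rfl⟩, i, j, hlt, vv_apply_i i j,
      vv_apply_j i j hij⟩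

-- ## sums: hyperplane membership
lemma sum_vv (i j : Fin 9) (hij : i ≠ j) : ∑ k, vv i j k = 3 := by
  unfold vv; rw [sum9 i j hij]; norm_num

lemma sum_pt3 : ∑ k, pt3 k = 3 := by
  simp [pt3, Finset.sum_const]; norm_num

lemma eA_mem_Hyp (A : Finset (Fin 9)) (hA : A.card = 3) : eA A ∈ Hyp 9 3 := by
  show ∑ k, eA A k = ((3:ℕ):ℝ)
  show ∑ k, chi A k = ((3:ℕ):ℝ)
  rw [sum_chi, hA]

lemma vv_mem_Hyp (i j : Fin 9) (hij : i ≠ j) : vv i j ∈ Hyp 9 3 := by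
  show ∑ k, vv i j k = ((3:ℕ):ℝ)
  rw [sum_vv i j hij]; norm_num

lemma pt3_mem_Hyp : pt3 ∈ Hyp 9 3 := by
  show ∑ k, pt3 k = ((3:ℕ):ℝ)
  rw [sum_pt3]; norm_num

-- ## the distance set
def Dset : Set ℝ := {Real.sqrt 2, 2, Real.sqrt 6}

lemma sqrt2_sq : Real.sqrt 2 ^ 2 = 2 := Real.sq_sqrt (by norm_num)
lemma sqrt6_sq : Real.sqrt 6 ^ 2 = 6 := Real.sq_sqrt (by norm_num)

lemma Dset_finite : Dset.Finite := ((Set.finite_singleton _).insert _).insert _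

lemma dist_self_sqrt (x z : E9) : dist x z = Real.sqrt (dist x z ^ 2) :=
  (Real.sqrt_sq dist_nonneg).symm

lemma mem_Dset_iff (x z : E9) : dist x z ∈ Dset ↔ dist x z ^ 2 ∈ ({2,4,6} : Set ℝ) := by
  constructor
  · rintro (h | h | h) <;> rw [h]
    · left; exact sqrt2_sq
    · right; left; norm_num
    · right; right; exact sqrt6_sq
  · rintro (h | h | h)
    · left; rw [dist_self_sqrt, h]
    · right; left
      rw [dist_self_sqrt, h, show (4:ℝ) = 2^2 by norm_num, Real.sqrt_sq (by norm_num)]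
    · right; right; rw [dist_self_sqrt, Set.mem_singleton_iff.mp h]; exact rfl

lemma ncard_Dset : Dset.ncard = 3 := by
  have h1 : Real.sqrt 2 ≠ 2 := by
    intro h
    have := congrArg (· ^ 2) h
    simp only [sqrt2_sq] at this; norm_num at this
  have h2 : Real.sqrt 2 ≠ Real.sqrt 6 := by
    intro h
    have := congrArg (· ^ 2) h
    simp only [sqrt2_sq, sqrt6_sq] at this; norm_num at this
  have h3 : (2:ℝ) ≠ Real.sqrt 6 := by
    intro h
    have := congrArg (· ^ 2) h
    simp only [sqrt6_sq] at this; norm_num at this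
  exact Set.ncard_eq_three.mpr ⟨_, _, _, h1, h2, h3, rfl⟩

lemma ne_of_dist_sq_ne_zero {x z : E9} {c : ℝ} (h : dist x z ^ 2 = c) (hc : c ≠ 0) :
    x ≠ z := by
  intro he
  rw [he, dist_self] at h
  simp at h
  exact hc h.symm

lemma distSet_mono {n : ℕ} {S S' : Set (EuclideanSpace ℝ (Fin n))} (h : S ⊆ S') :
    distSet S ⊆ distSet S' := by
  rintro d ⟨x, hx, z, hz, hne, rfl⟩
  exact ⟨x, h hx, z, h hz, hne, rfl⟩

-- witnesses realizing all three distances inside the Johnson scheme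
lemma Dset_subset_distSet {T : Set E9} (hJT : JohnsonRep 9 3 ⊆ T) : Dset ⊆ distSet T := by
  have mem : ∀ A : Finset (Fin 9), A.card = 3 → eA A ∈ T := fun A hA =>
    hJT ((mem_J_iff _).mpr ⟨A, hA, rfl⟩)
  have c1 : (({0,1,2} : Finset (Fin 9)).card = 3) := by decide
  have c2 : (({0,1,3} : Finset (Fin 9)).card = 3) := by decide
  have c3 : (({0,3,4} : Finset (Fin 9)).card = 3) := by decide
  have c4 : (({3,4,5} : Finset (Fin 9)).card = 3) := by decide
  have d12 : dist (eA {0,1,2}) (eA {0,1,3}) ^ 2 = 2 := by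
    rw [dJJ _ _ c1 c2]
    norm_num [show ({0,1,2} : Finset (Fin 9)) ∩ {0,1,3} = {0,1} from by decide]
  have d13 : dist (eA {0,1,2}) (eA {0,3,4}) ^ 2 = 4 := by
    rw [dJJ _ _ c1 c3]
    norm_num [show ({0,1,2} : Finset (Fin 9)) ∩ {0,3,4} = {0} from by decide]
  have d14 : dist (eA {0,1,2}) (eA {3,4,5}) ^ 2 = 6 := by
    rw [dJJ _ _ c1 c4]
    norm_num [show ({0,1,2} : Finset (Fin 9)) ∩ {3,4,5} = ∅ from by decide]
  rintro d (h | h | h)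
  · exact ⟨_, mem _ c1, _, mem _ c2, ne_of_dist_sq_ne_zero d12 (by norm_num),
      by rw [h, dist_self_sqrt, d12]⟩
  · refine ⟨_, mem _ c1, _, mem _ c3, ne_of_dist_sq_ne_zero d13 (by norm_num), ?_⟩
    rw [h, dist_self_sqrt, d13, show (4:ℝ) = 2^2 by norm_num, Real.sqrt_sq (by norm_num)]
  · exact ⟨_, mem _ c1, _, mem _ c4, ne_of_dist_sq_ne_zero d14 (by norm_num),
      by rw [h, dist_self_sqrt, d14]⟩

-- ## membership in the 121-point set
lemma mem_S_iff (s : E9) : s ∈ JohnsonRep 9 3 ∪ {pt3} ∪ X93' ↔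
    (∃ A : Finset (Fin 9), A.card = 3 ∧ s = eA A) ∨ s = pt3 ∨
      ∃ i j : Fin 9, (j : ℕ) < (i : ℕ) ∧ s = vv i j := by
  constructor
  · rintro ((h | h) | h)
    · exact Or.inl ((mem_J_iff s).mp h)
    · exact Or.inr (Or.inl (Set.mem_singleton_iff.mp h))
    · exact Or.inr (Or.inr ((mem_X93'_iff s).mp h))
  · rintro (h | h | h)
    · exact Or.inl (Or.inl ((mem_J_iff s).mpr h))
    · exact Or.inl (Or.inr (Set.mem_singleton_iff.mpr h))
    · exact Or.inr ((mem_X93'_iff s).mpr h)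

lemma fin_ne_of_lt {i j : Fin 9} (h : (j : ℕ) < (i : ℕ)) : i ≠ j := by
  intro he; rw [he] at h; exact lt_irrefl _ h

-- squared distances between points of the 121-point set
lemma S_pair_sq (p q : E9) (hp : p ∈ JohnsonRep 9 3 ∪ {pt3} ∪ X93')
    (hq : q ∈ JohnsonRep 9 3 ∪ {pt3} ∪ X93') (hne : p ≠ q) :
    dist p q ^ 2 ∈ ({2,4,6} : Set ℝ) := by
  have hJJ : ∀ A B : Finset (Fin 9), A.card = 3 → B.card = 3 → eA A ≠ eA B →
      dist (eA A) (eA B) ^ 2 ∈ ({2,4,6} : Set ℝ) := by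
    intro A B hA hB hABne
    have hAB : A ≠ B := fun h => hABne (h ▸ rfl)
    rw [dJJ A B hA hB]
    have hle : (A ∩ B).card ≤ 3 := hA ▸ Finset.card_le_card Finset.inter_subset_left
    have hne3 : (A ∩ B).card ≠ 3 := by
      intro h3
      have h1 : A ∩ B = A := Finset.eq_of_subset_of_card_le Finset.inter_subset_left
        (by rw [hA, h3])
      have h2 : A ⊆ B := by rw [← h1]; exact Finset.inter_subset_right
      exact hAB (Finset.eq_of_subset_of_card_le h2 (by rw [hA, hB]))
    have : (A ∩ B).card = 0 ∨ (A ∩ B).card = 1 ∨ (A ∩ B).card = 2 := by omega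
    rcases this with h | h | h <;> rw [h] <;> norm_num
  have hJv : ∀ (A : Finset (Fin 9)) (i j : Fin 9), A.card = 3 → i ≠ j →
      dist (eA A) (vv i j) ^ 2 ∈ ({2,4,6} : Set ℝ) := by
    intro A i j hA hij
    rw [dJv A hA i j hij]
    by_cases hi : i ∈ A <;> by_cases hj : j ∈ A <;> simp [chi, hi, hj] <;> norm_num
  have hvvS : ∀ i j i' j' : Fin 9, (j : ℕ) < (i : ℕ) → (j' : ℕ) < (i' : ℕ) →
      vv i j ≠ vv i' j' → dist (vv i j) (vv i' j') ^ 2 ∈ ({2,4,6} : Set ℝ) := by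
    intro i j i' j' hlt hlt' hvne
    have hij : i ≠ j := fin_ne_of_lt hlt
    have hij' : i' ≠ j' := fin_ne_of_lt hlt'
    by_cases hii' : i = i'
    · subst hii'
      by_cases hjj' : j = j'
      · subst hjj'; exact absurd rfl hvne
      · rw [dvv_same_i i j j' hij (fin_ne_of_lt hlt') hjj']; norm_num
    · by_cases hjj' : j = j'
      · subst hjj'; rw [dvv_same_j i i' j hij hij' hii']; norm_num
      · by_cases hij2 : i = j'
        · by_cases hji2 : j = i'
          · exfalso
            have e1 := congrArg Fin.val hij2
            have e2 := congrArg Fin.val hji2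
            omega
          · subst hij2
            rw [dvv_c5 i j i' hij (Ne.symm hii') (fun h => hji2 h.symm)]; norm_num
        · by_cases hji2 : j = i'
          · subst hji2
            rw [dvv_c6 i j j' hij (fun h => hij2 h.symm) (fun h => hjj' h.symm)]; norm_num
          · rw [dvv_gen i j i' j' hij hii' hij2 hji2 hjj' hij']; norm_num
  rcases (mem_S_iff p).mp hp with ⟨A, hA, rfl⟩ | rfl | ⟨i, j, hlt, rfl⟩ <;>
    rcases (mem_S_iff q).mp hq with ⟨B, hB, rfl⟩ | rfl | ⟨i', j', hlt', rfl⟩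
  · exact hJJ A B hA hB hne
  · rw [dJpt3 A hA]; norm_num
  · exact hJv A i' j' hA (fin_ne_of_lt hlt')
  · rw [dist_comm, dJpt3 B hB]; norm_num
  · exact absurd rfl hne
  · rw [dpt3v i' j' (fin_ne_of_lt hlt')]; norm_num
  · rw [dist_comm]; exact hJv B i j hB (fin_ne_of_lt hlt)
  · rw [dist_comm, dpt3v i j (fin_ne_of_lt hlt)]; norm_num
  · exact hvvS i j i' j' hlt hlt' hne

lemma J_subset_S : JohnsonRep 9 3 ⊆ JohnsonRep 9 3 ∪ {pt3} ∪ X93' := fun x hx =>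
  Set.mem_union_left _ (Set.mem_union_left _ hx)

lemma distSet_S0 : distSet (JohnsonRep 9 3 ∪ {pt3} ∪ X93') = Dset := by
  apply Set.Subset.antisymm
  · rintro d ⟨x, hx, z, hz, hne, rfl⟩
    rw [mem_Dset_iff]
    exact S_pair_sq x z hx hz hne
  · exact Dset_subset_distSet J_subset_S

lemma isSDS_S0 : IsSDistanceSet 3 (JohnsonRep 9 3 ∪ {pt3} ∪ X93') := by
  rw [IsSDistanceSet, distSet_S0]
  exact ⟨Dset_finite, ncard_Dset⟩

-- ## cardinalities
lemma eA_inj : Function.Injective eA := by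
  intro A B h
  ext k
  have hk := congrFun (congrArg WithLp.ofLp h) k
  by_cases hA : k ∈ A <;> by_cases hB : k ∈ B <;> simp [eA, chi, hA, hB] at hk ⊢

lemma J_eq : JohnsonRep 9 3 = eA '' {A : Finset (Fin 9) | A.card = 3} := by
  ext x
  rw [mem_J_iff]
  constructor
  · rintro ⟨A, hA, rfl⟩; exact ⟨A, hA, rfl⟩
  · rintro ⟨A, hA, rfl⟩; exact ⟨A, hA, rfl⟩

lemma J_finite : (JohnsonRep 9 3).Finite := by
  rw [J_eq]; exact (Set.toFinite _).image _

lemma ncard_J : (JohnsonRep 9 3).ncard = 84 := by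
  rw [J_eq, Set.ncard_image_of_injective _ eA_inj]
  have h : {A : Finset (Fin 9) | A.card = 3}
      = (↑(Finset.univ.powersetCard 3 : Finset (Finset (Fin 9))) : Set (Finset (Fin 9))) := by
    ext A; simp [Finset.mem_powersetCard_univ]
  rw [h, Set.ncard_coe_finset]
  simp [Finset.card_powersetCard]
  decide

lemma X93'_eq : X93' = (fun p : Fin 9 × Fin 9 => vv p.1 p.2) ''
    {p : Fin 9 × Fin 9 | (p.2 : ℕ) < (p.1 : ℕ)} := by
  ext y
  rw [mem_X93'_iff]
  constructor
  · rintro ⟨i, j, hlt, rfl⟩; exact ⟨(i, j), hlt, rfl⟩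
  · rintro ⟨⟨i, j⟩, hlt, rfl⟩; exact ⟨i, j, hlt, rfl⟩

lemma X93'_finite : X93'.Finite := by
  rw [X93'_eq]; exact (Set.toFinite _).image _

lemma ncard_X93' : X93'.ncard = 36 := by
  rw [X93'_eq]
  rw [Set.ncard_image_of_injOn]
  · have h : {p : Fin 9 × Fin 9 | (p.2 : ℕ) < (p.1 : ℕ)}
        = ↑(Finset.univ.filter (fun p : Fin 9 × Fin 9 => (p.2 : ℕ) < (p.1 : ℕ))) := by
      ext p; simp
    rw [h, Set.ncard_coe_finset]
    decide
  · rintro ⟨i, j⟩ hij ⟨i', j'⟩ hij' h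
    simp only [Set.mem_setOf_eq] at hij hij'
    have := vv_inj i j i' j' (fin_ne_of_lt hij) (fin_ne_of_lt hij') h
    simp [this.1, this.2]

lemma pt3_not_mem_J : pt3 ∉ JohnsonRep 9 3 := by
  intro h
  rcases h.1 0 with h0 | h0 <;> simp [pt3] at h0 <;> norm_num at h0

lemma pt3_not_mem_X93' : pt3 ∉ X93' := by
  intro h
  obtain ⟨i, j, hlt, heq⟩ := (mem_X93'_iff pt3).mp h
  have := congrFun (congrArg WithLp.ofLp heq) i
  rw [vv_apply_i] at this
  simp [pt3] at this
  norm_num at this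

lemma vv_not_mem_J (i j : Fin 9) (hij : i ≠ j) : vv i j ∉ JohnsonRep 9 3 := by
  intro h
  rcases h.1 j with h0 | h0 <;> rw [vv_apply_j i j hij] at h0 <;> norm_num at h0

lemma ncard_S0 : (JohnsonRep 9 3 ∪ {pt3} ∪ X93').ncard = 121 := by
  have hd1 : Disjoint (JohnsonRep 9 3) ({pt3} : Set E9) :=
    Set.disjoint_singleton_right.mpr pt3_not_mem_J
  have hd2 : Disjoint (JohnsonRep 9 3 ∪ {pt3}) X93' := by
    rw [Set.disjoint_left]
    rintro x (hx | hx) hx'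
    · obtain ⟨i, j, hlt, rfl⟩ := (mem_X93'_iff x).mp hx'
      exact vv_not_mem_J i j (fin_ne_of_lt hlt) hx
    · rw [hx] at hx'
      exact pt3_not_mem_X93' hx'
  rw [Set.ncard_union_eq hd2 (J_finite.union (Set.finite_singleton _)) X93'_finite,
    Set.ncard_union_eq hd1 J_finite (Set.finite_singleton _), ncard_J,
    Set.ncard_singleton, ncard_X93']

-- ## the classification of candidate points
lemma fresh2 (i j : Fin 9) : ∃ c d : Fin 9, c ≠ d ∧ c ≠ i ∧ c ≠ j ∧ d ≠ i ∧ d ≠ j := by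
  classical
  have hcard : 1 < (Finset.univ \ {i, j} : Finset (Fin 9)).card := by
    rw [Finset.card_sdiff_of_subset (Finset.subset_univ _)]
    have : ({i, j} : Finset (Fin 9)).card ≤ 2 :=
      le_trans (Finset.card_insert_le _ _) (by simp)
    simp only [Finset.card_univ, Fintype.card_fin]
    omega
  obtain ⟨c, hc, d, hd, hcd⟩ := Finset.one_lt_card.mp hcard
  simp only [Finset.mem_sdiff, Finset.mem_univ, true_and, Finset.mem_insert,
    Finset.mem_singleton, not_or] at hc hd
  exact ⟨c, d, hcd, hc.1, hc.2, hd.1, hd.2⟩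

lemma fresh4 (i j l m : Fin 9) : ∃ p : Fin 9, p ≠ i ∧ p ≠ j ∧ p ≠ l ∧ p ≠ m := by
  classical
  have hcard : 0 < (Finset.univ \ {i, j, l, m} : Finset (Fin 9)).card := by
    rw [Finset.card_sdiff_of_subset (Finset.subset_univ _)]
    have : ({i, j, l, m} : Finset (Fin 9)).card ≤ 4 :=
      le_trans (Finset.card_insert_le _ _) (by
        have : ({j, l, m} : Finset (Fin 9)).card ≤ 3 :=
          le_trans (Finset.card_insert_le _ _) (by
            have : ({l, m} : Finset (Fin 9)).card ≤ 2 :=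
              le_trans (Finset.card_insert_le _ _) (by simp)
            omega)
        omega)
    simp only [Finset.card_univ, Fintype.card_fin]
    omega
  obtain ⟨p, hp⟩ := Finset.card_pos.mp hcard
  simp only [Finset.mem_sdiff, Finset.mem_univ, true_and, Finset.mem_insert,
    Finset.mem_singleton, not_or] at hp
  exact ⟨p, hp.1, hp.2.1, hp.2.2.1, hp.2.2.2⟩

lemma sum_triple (y : E9) (i j l : Fin 9) (hij : i ≠ j) (hil : i ≠ l) (hjl : j ≠ l) :
    ∑ k ∈ ({i, j, l} : Finset (Fin 9)), y k = y i + y j + y l := by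
  rw [Finset.sum_insert (by simp [hij, hil]), Finset.sum_insert (by simp [hjl]),
    Finset.sum_singleton]
  ring

lemma card_triple (i j l : Fin 9) (hij : i ≠ j) (hil : i ≠ l) (hjl : j ≠ l) :
    ({i, j, l} : Finset (Fin 9)).card = 3 := by
  rw [Finset.card_insert_of_notMem (by simp [hij, hil]),
    Finset.card_insert_of_notMem (by simp [hjl]), Finset.card_singleton]

lemma classify (y : E9) (a : ℝ) (hsum : ∑ k, y k = 3)
    (hq : ∑ k, (y k)^2 = 2*a - 1)
    (hT : ∀ T : Finset (Fin 9), T.card = 3 → (∑ k ∈ T, y k) ∈ ({a, a-1, a-2} : Set ℝ)) :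
    y = pt3 ∨ ∃ i j : Fin 9, i ≠ j ∧ y = vv i j := by
  classical
  have hs3 : ∀ i j l : Fin 9, i ≠ j → i ≠ l → j ≠ l →
      y i + y j + y l = a ∨ y i + y j + y l = a - 1 ∨ y i + y j + y l = a - 2 := by
    intro i j l hij hil hjl
    have := hT {i, j, l} (card_triple i j l hij hil hjl)
    rw [sum_triple y i j l hij hil hjl] at this
    simpa [Set.mem_insert_iff] using this
  have hdiff : ∀ i j : Fin 9, y i - y j = -2 ∨ y i - y j = -1 ∨ y i - y j = 0 ∨
      y i - y j = 1 ∨ y i - y j = 2 := by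
    intro i j
    by_cases hij : i = j
    · subst hij; right; right; left; ring
    · obtain ⟨c, d, hcd, hci, hcj, hdi, hdj⟩ := fresh2 i j
      have s1 := hs3 i c d (Ne.symm hci) (Ne.symm hdi) hcd
      have s2 := hs3 j c d (Ne.symm hcj) (Ne.symm hdj) hcd
      rcases s1 with h1 | h1 | h1 <;> rcases s2 with h2 | h2 | h2 <;>
        first
          | exact Or.inl (by linarith)
          | exact Or.inr (Or.inl (by linarith))
          | exact Or.inr (Or.inr (Or.inl (by linarith)))
          | exact Or.inr (Or.inr (Or.inr (Or.inl (by linarith))))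
          | exact Or.inr (Or.inr (Or.inr (Or.inr (by linarith))))
  obtain ⟨k, hk⟩ := Finite.exists_max (fun i : Fin 9 => y i)
  by_cases hconst : ∀ i, y i = y k
  · left
    have h9 : (9:ℝ) * y k = 3 := by
      rw [← hsum, Finset.sum_congr rfl (fun i _ => hconst i), Finset.sum_const,
        Finset.card_univ, Fintype.card_fin, nsmul_eq_mul]
      norm_num
    have : y k = 1/3 := by linarith
    ext i
    rw [hconst i, this]; rfl
  · -- not constant: get the minimizer l with y l < y k
    push_neg at hconst
    obtain ⟨i0, hi0⟩ := hconst
    obtain ⟨l, hl⟩ := Finite.exists_min (fun i : Fin 9 => y i)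
    have hlk : y l < y k := lt_of_le_of_lt (hl i0) (lt_of_le_of_ne (hk i0) hi0)
    have hkl : k ≠ l := fun h => by rw [h] at hlk; exact lt_irrefl _ hlk
    have hgap : y k - y l = 1 ∨ y k - y l = 2 := by
      rcases hdiff k l with h | h | h | h | h
      · linarith
      · linarith
      · linarith
      · left; exact h
      · right; exact h
    rcases hgap with hgap | hgap
    · -- gap 1 : two-valued, leads to contradiction
      exfalso
      have h01 : ∀ i, y i = y l ∨ y i = y k := by
        intro i
        rcases hdiff i l with h | h | h | h | h
        · linarith [hl i]
        · linarith [hl i]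
        · left; linarith
        · right; linarith
        · linarith [hk i]
      set s : Finset (Fin 9) := Finset.univ.filter (fun i => y i = y k) with hs
      have hks : k ∈ s := by simp [hs]
      have hlns : l ∉ s := by
        simp only [hs, Finset.mem_filter, Finset.mem_univ, true_and]
        intro h; rw [h] at hlk; exact lt_irrefl _ hlk
      have hcompl : ∀ i, i ∉ s → y i = y l := by
        intro i hi
        simp only [hs, Finset.mem_filter, Finset.mem_univ, true_and] at hi
        rcases h01 i with h | h
        · exact h
        · exact absurd h hi
      have hsum_split : (s.card : ℝ) * y k + ((9 - s.card : ℕ) : ℝ) * y l = 3 := by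
        have h1 : ∑ i ∈ s, y i = (s.card : ℝ) * y k := by
          rw [Finset.sum_eq_card_nsmul (fun i hi => (Finset.mem_filter.mp hi).2)]
          rw [nsmul_eq_mul]
        have h2 : ∑ i ∈ Finset.univ \ s, y i = (((9:ℕ) - s.card : ℕ) : ℝ) * y l := by
          rw [Finset.sum_eq_card_nsmul (fun i hi => hcompl i (Finset.mem_sdiff.mp hi).2)]
          rw [Finset.card_sdiff_of_subset (Finset.subset_univ _)]
          simp [mul_comm]
        have h3 : ∑ i ∈ Finset.univ \ s, y i + ∑ i ∈ s, y i = ∑ i, y i :=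
          Finset.sum_sdiff (Finset.subset_univ _)
        rw [hsum, h1, h2] at h3
        linarith
      have hq_split : (s.card : ℝ) * (y k)^2 + ((9 - s.card : ℕ) : ℝ) * (y l)^2 = 2*a - 1 := by
        have h1 : ∑ i ∈ s, (y i)^2 = (s.card : ℝ) * (y k)^2 := by
          rw [Finset.sum_eq_card_nsmul (fun i hi => by rw [(Finset.mem_filter.mp hi).2])]
          simp [mul_comm]
        have h2 : ∑ i ∈ Finset.univ \ s, (y i)^2 = (((9:ℕ) - s.card : ℕ) : ℝ) * (y l)^2 := by
          rw [Finset.sum_eq_card_nsmul (fun i hi => by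
            rw [hcompl i (Finset.mem_sdiff.mp hi).2])]
          rw [Finset.card_sdiff_of_subset (Finset.subset_univ _)]
          simp [mul_comm]
        have h3 : ∑ i ∈ Finset.univ \ s, (y i)^2 + ∑ i ∈ s, (y i)^2 = ∑ i, (y i)^2 :=
          Finset.sum_sdiff (Finset.subset_univ _)
        rw [hq, h1, h2] at h3
        linarith
      have hcard_s_le : s.card ≤ 8 := by
        have : s ⊆ Finset.univ.erase l := by
          intro i hi
          rw [Finset.mem_erase]
          exact ⟨fun h => hlns (h ▸ hi), Finset.mem_univ i⟩
        calc s.card ≤ (Finset.univ.erase l).card := Finset.card_le_card this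
          _ = 8 := by rw [Finset.card_erase_of_mem (Finset.mem_univ l)]; simp
      have hcard_s_pos : 1 ≤ s.card := Finset.card_pos.mpr ⟨k, hks⟩
      -- a triple of maxima gives sum 3 y k, a triple of minima gives 3 y l
      have htrip_s : 3 ≤ s.card → (3*(y k) = a ∨ 3*(y k) = a - 1 ∨ 3*(y k) = a - 2) := by
        intro h3
        obtain ⟨T, hTs, hTcard⟩ := Finset.exists_subset_card_eq h3
        have := hT T hTcard
        have hsum_T : ∑ i ∈ T, y i = 3 * y k := by
          rw [Finset.sum_eq_card_nsmul (fun i hi => (Finset.mem_filter.mp (hTs hi)).2), hTcard]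
          push_cast; ring
        rw [hsum_T] at this
        simpa [Set.mem_insert_iff] using this
      have htrip_c : 3 ≤ 9 - s.card → (3*(y l) = a ∨ 3*(y l) = a - 1 ∨ 3*(y l) = a - 2) := by
        intro h3
        have h3' : 3 ≤ (Finset.univ \ s).card := by
          rw [Finset.card_sdiff_of_subset (Finset.subset_univ _)]
          simpa using h3
        obtain ⟨T, hTs, hTcard⟩ := Finset.exists_subset_card_eq h3'
        have := hT T hTcard
        have hsum_T : ∑ i ∈ T, y i = 3 * y l := by
          rw [Finset.sum_eq_card_nsmul (fun i hi => hcompl i (Finset.mem_sdiff.mp (hTs hi)).2),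
            hTcard]
          push_cast; ring
        rw [hsum_T] at this
        simpa [Set.mem_insert_iff] using this
      -- both cannot hold
      have hnotboth : ¬(3 ≤ s.card ∧ 3 ≤ 9 - s.card) := by
        rintro ⟨h1, h2⟩
        rcases htrip_s h1 with e | e | e <;> rcases htrip_c h2 with f | f | f <;> linarith
      have hcases : s.card = 1 ∨ s.card = 2 ∨ s.card = 7 ∨ s.card = 8 := by omega
      rcases hcases with hc | hc | hc | hc
      · -- t = 1 : y l = 2/9
        have hyl : y l = 2/9 := by
          rw [hc] at hsum_split; push_cast at hsum_split; linarith
        have hyk : y k = 11/9 := by linarith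
        have hq' := hq_split
        rw [hc, hyl, hyk] at hq'
        norm_num at hq'
        have ha : a = 13/9 := by linarith
        rcases htrip_c (by omega) with e | e | e <;> rw [hyl, ha] at e <;> norm_num at e
      · -- t = 2 : y l = 1/9
        have hyl : y l = 1/9 := by
          rw [hc] at hsum_split; push_cast at hsum_split; linarith
        have hyk : y k = 10/9 := by linarith
        have hq' := hq_split
        rw [hc, hyl, hyk] at hq'
        norm_num at hq'
        have ha : a = 16/9 := by linarith
        rcases htrip_c (by omega) with e | e | e <;> rw [hyl, ha] at e <;> norm_num at e
      · -- t = 7 : y l = -4/9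
        have hyl : y l = -4/9 := by
          rw [hc] at hsum_split; push_cast at hsum_split; linarith
        have hyk : y k = 5/9 := by linarith
        have hq' := hq_split
        rw [hc, hyl, hyk] at hq'
        norm_num at hq'
        have ha : a = 16/9 := by linarith
        rcases htrip_s (by omega) with e | e | e <;> rw [hyk, ha] at e <;> norm_num at e
      · -- t = 8 : y l = -5/9
        have hyl : y l = -5/9 := by
          rw [hc] at hsum_split; push_cast at hsum_split; linarith
        have hyk : y k = 4/9 := by linarith
        have hq' := hq_split
        rw [hc, hyl, hyk] at hq'
        norm_num at hq'
        have ha : a = 13/9 := by linarith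
        rcases htrip_s (by omega) with e | e | e <;> rw [hyk, ha] at e <;> norm_num at e
    · -- gap 2 : this gives the X93 vectors
      right
      have step1 : ∀ p r : Fin 9, p ≠ r → p ≠ k → p ≠ l → r ≠ k → r ≠ l →
          y k + y p + y r = a ∧ y l + y p + y r = a - 2 := by
        intro p r hpr hpk hpl hrk hrl
        have s1 := hs3 k p r (Ne.symm hpk) (Ne.symm hrk) hpr
        have s2 := hs3 l p r (Ne.symm hpl) (Ne.symm hrl) hpr
        rcases s1 with h1 | h1 | h1 <;> rcases s2 with h2 | h2 | h2 <;>
          exact ⟨by linarith, by linarith⟩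
      have hc : ∀ p r : Fin 9, p ≠ k → p ≠ l → r ≠ k → r ≠ l → y p = y r := by
        intro p r hpk hpl hrk hrl
        by_cases hpr : p = r
        · rw [hpr]
        · obtain ⟨q, hq1, hq2, hq3, hq4⟩ := fresh4 k l p r
          have e1 := (step1 p q (fun h => hq3 h.symm) hpk hpl hq1 hq2).1
          have e2 := (step1 r q (fun h => hq4 h.symm) hrk hrl hq1 hq2).1
          linarith
      obtain ⟨p0, r0, hp0r0, hp0k, hp0l, hr0k, hr0l⟩ := fresh2 k l
      have hcall : ∀ p, p ≠ k → p ≠ l → y p = y p0 := fun p h1 h2 =>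
        hc p p0 h1 h2 hp0k hp0l
      have E1 : y k + 2 * y p0 = a := by
        have := (step1 p0 r0 hp0r0 hp0k hp0l hr0k hr0l).1
        rw [hcall r0 hr0k hr0l] at this
        linarith
      have E2 : 3 * y p0 = a ∨ 3 * y p0 = a - 1 ∨ 3 * y p0 = a - 2 := by
        obtain ⟨q, hq1, hq2, hq3, hq4⟩ := fresh4 k l p0 r0
        have := hs3 p0 r0 q hp0r0 (fun h => hq3 h.symm) (fun h => hq4 h.symm)
        rw [hcall r0 hr0k hr0l, hcall q hq1 hq2] at this
        rcases this with h | h | h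
        · left; linarith
        · right; left; linarith
        · right; right; linarith
      have E3 : y k + y l + 7 * y p0 = 3 := by
        have hsplit : ∑ i ∈ Finset.univ \ ({k, l} : Finset (Fin 9)), y i
            + ∑ i ∈ ({k, l} : Finset (Fin 9)), y i = ∑ i, y i :=
          Finset.sum_sdiff (Finset.subset_univ _)
        have h1 : ∑ i ∈ ({k, l} : Finset (Fin 9)), y i = y k + y l := by
          rw [Finset.sum_insert (by simp [hkl]), Finset.sum_singleton]
        have h2 : ∑ i ∈ Finset.univ \ ({k, l} : Finset (Fin 9)), y i = 7 * y p0 := by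
          rw [Finset.sum_eq_card_nsmul (fun i hi => by
            simp only [Finset.mem_sdiff, Finset.mem_univ, true_and, Finset.mem_insert,
              Finset.mem_singleton, not_or] at hi
            exact hcall i hi.1 hi.2)]
          rw [Finset.card_sdiff_of_subset (Finset.subset_univ _)]
          rw [Finset.card_insert_of_notMem (by simp [hkl]), Finset.card_singleton]
          norm_num [mul_comm]
        rw [hsum, h1, h2] at hsplit
        linarith
      have E4 : (y k)^2 + (y l)^2 + 7 * (y p0)^2 = 2*a - 1 := by
        have hsplit : ∑ i ∈ Finset.univ \ ({k, l} : Finset (Fin 9)), (y i)^2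
            + ∑ i ∈ ({k, l} : Finset (Fin 9)), (y i)^2 = ∑ i, (y i)^2 :=
          Finset.sum_sdiff (Finset.subset_univ _)
        have h1 : ∑ i ∈ ({k, l} : Finset (Fin 9)), (y i)^2 = (y k)^2 + (y l)^2 := by
          rw [Finset.sum_insert (by simp [hkl]), Finset.sum_singleton]
        have h2 : ∑ i ∈ Finset.univ \ ({k, l} : Finset (Fin 9)), (y i)^2 = 7 * (y p0)^2 := by
          rw [Finset.sum_eq_card_nsmul (fun i hi => by
            simp only [Finset.mem_sdiff, Finset.mem_univ, true_and, Finset.mem_insert,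
              Finset.mem_singleton, not_or] at hi
            rw [hcall i hi.1 hi.2])]
          rw [Finset.card_sdiff_of_subset (Finset.subset_univ _)]
          rw [Finset.card_insert_of_notMem (by simp [hkl]), Finset.card_singleton]
          norm_num [mul_comm]
        rw [hq, h1, h2] at hsplit
        linarith
      rcases E2 with e | e | e
      · -- c = y k, contradiction
        exfalso
        have h1 : y p0 = y k := by linarith
        have h2 : y p0 = 5/9 := by linarith
        have h3 : y k = 5/9 := by linarith
        have h4 : y l = -13/9 := by linarith
        have h5 : a = 5/3 := by linarith
        rw [h2, h3, h4, h5] at E4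
        norm_num at E4
      · -- the solution : y = vv k l
        have hc13 : y p0 = 1/3 := by linarith
        have hk43 : y k = 4/3 := by linarith
        have hl23 : y l = -2/3 := by linarith
        refine ⟨k, l, hkl, ?_⟩
        ext p
        by_cases hpk : p = k
        · rw [hpk, hk43, vv_apply_i]
        · by_cases hpl : p = l
          · rw [hpl, hl23, vv_apply_j k l hkl]
          · rw [vv_apply_other k l p hpk hpl, hcall p hpk hpl, hc13]
      · -- c = y l, contradiction
        exfalso
        have h1 : y p0 = y l := by linarith
        have h2 : y p0 = 1/9 := by linarith
        have h3 : y l = 1/9 := by linarith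
        have h4 : y k = 19/9 := by linarith
        have h5 : a = 7/3 := by linarith
        rw [h2, h3, h4, h5] at E4
        norm_num at E4

-- ## bridge: distance conditions to the triple-sum form
lemma classify' (y : E9) (hsum : ∑ k, y k = 3)
    (h : ∀ T : Finset (Fin 9), T.card = 3 → dist y (eA T) ^ 2 ∈ ({2,4,6} : Set ℝ)) :
    y = pt3 ∨ ∃ i j : Fin 9, i ≠ j ∧ y = vv i j := by
  set q : ℝ := ∑ k, (y k)^2 with hqdef
  have hdq : ∀ T : Finset (Fin 9), T.card = 3 →
      dist y (eA T) ^ 2 = q + 3 - 2 * ∑ k ∈ T, y k := by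
    intro T hT
    rw [dist_sq]
    have hpt : ∀ k, (y k - eA T k)^2
        = (y k)^2 - 2 * (if k ∈ T then y k else 0) + (if k ∈ T then (1:ℝ) else 0) := by
      intro k
      by_cases hk : k ∈ T <;> simp [eA, chi, hk] <;> ring
    rw [Finset.sum_congr rfl (fun k _ => hpt k)]
    rw [Finset.sum_add_distrib, Finset.sum_sub_distrib, ← Finset.mul_sum]
    rw [Finset.sum_ite_mem, Finset.sum_ite_mem, Finset.sum_const, Finset.univ_inter,
      hT, nsmul_eq_mul, ← hqdef]
    push_cast
    ring
  apply classify y ((q+1)/2) hsum (by rw [← hqdef]; ring)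
  intro T hT
  have h1 := h T hT
  have h2 := hdq T hT
  rw [h2] at h1
  simp only [Set.mem_insert_iff, Set.mem_singleton_iff] at h1 ⊢
  rcases h1 with h1 | h1 | h1
  · left; linarith
  · right; left; linarith
  · right; right; linarith

lemma hyp_sum (z : E9) (h : z ∈ Hyp 9 3) : ∑ k, z k = 3 := by
  have h' : ∑ k, z k = ((3:ℕ):ℝ) := h
  rw [h']; norm_num

lemma vv_ne_pt3 (i j : Fin 9) : vv i j ≠ pt3 := by
  intro h
  have := congrFun (congrArg WithLp.ofLp h) i
  rw [vv_apply_i] at this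
  have : (4/3 : ℝ) = 1/3 := this
  norm_num at this

-- general vv-vv membership (no swap)
lemma dvv_mem (i j i' j' : Fin 9) (hij : i ≠ j) (hij' : i' ≠ j')
    (hnoswap : ¬(i = j' ∧ j = i')) (hne : vv i j ≠ vv i' j') :
    dist (vv i j) (vv i' j') ^ 2 ∈ ({2,4,6} : Set ℝ) := by
  by_cases hii' : i = i'
  · subst hii'
    by_cases hjj' : j = j'
    · subst hjj'; exact absurd rfl hne
    · rw [dvv_same_i i j j' hij hij' hjj']; norm_num
  · by_cases hjj' : j = j'
    · subst hjj'; rw [dvv_same_j i i' j hij hij' hii']; norm_num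
    · by_cases hij2 : i = j'
      · by_cases hji2 : j = i'
        · exact absurd ⟨hij2, hji2⟩ hnoswap
        · subst hij2
          rw [dvv_c5 i j i' hij (Ne.symm hii') (fun h => hji2 h.symm)]; norm_num
      · by_cases hji2 : j = i'
        · subst hji2
          rw [dvv_c6 i j j' hij (fun h => hij2 h.symm) (fun h => hjj' h.symm)]; norm_num
        · rw [dvv_gen i j i' j' hij hii' hij2 hji2 hjj' hij']; norm_num

-- adding a compatible point to a set with distance set Dset
lemma distSet_union_point {T : Set E9} (hTD : distSet T = Dset) {z : E9}
    (hz : ∀ t ∈ T, t ≠ z → dist z t ∈ Dset) :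
    distSet (T ∪ {z}) = Dset := by
  apply Set.Subset.antisymm
  · rintro d ⟨x, hx, w, hw, hne, rfl⟩
    rcases hx with hx | hx <;> rcases hw with hw | hw
    · exact hTD ▸ ⟨x, hx, w, hw, hne, rfl⟩
    · rw [Set.mem_singleton_iff.mp hw]
      rw [Set.mem_singleton_iff.mp hw] at hne
      rw [dist_comm]
      exact hz x hx hne
    · rw [Set.mem_singleton_iff.mp hx]
      rw [Set.mem_singleton_iff.mp hx] at hne
      exact hz w hw (Ne.symm hne)
    · exact absurd (((Set.mem_singleton_iff.mp hx).trans
        (Set.mem_singleton_iff.mp hw).symm)) hne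
  · exact hTD ▸ distSet_mono Set.subset_union_left

theorem maximal_three_distance_J93 (x0 : EuclideanSpace ℝ (Fin 9)) (hx0 : ∀ i, x0 i = 1/3) :
    (JohnsonRep 9 3 ∪ {x0} ∪ X93') ⊆ Hyp 9 3 ∧
    IsSDistanceSet 3 (JohnsonRep 9 3 ∪ {x0} ∪ X93') ∧
    (¬∃ y ∈ Hyp 9 3 \ (JohnsonRep 9 3 ∪ {x0} ∪ X93'),
      IsSDistanceSet 3 (JohnsonRep 9 3 ∪ {x0} ∪ X93' ∪ {y})) ∧
    (JohnsonRep 9 3 ∪ {x0} ∪ X93').ncard = 121 ∧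
    (∀ T : Set (EuclideanSpace ℝ (Fin 9)), JohnsonRep 9 3 ⊆ T → T ⊆ Hyp 9 3 →
      IsSDistanceSet 3 T →
      (¬∃ y ∈ Hyp 9 3 \ T, IsSDistanceSet 3 (T ∪ {y})) →
      T.ncard = 121) := by
  have hx0' : x0 = pt3 := PiLp.ext fun i => hx0 i
  subst hx0'
  refine ⟨?_, isSDS_S0, ?_, ncard_S0, ?_⟩
  · -- part 1: contained in the hyperplane
    intro x hx
    rcases (mem_S_iff x).mp hx with ⟨A, hA, rfl⟩ | rfl | ⟨i, j, hlt, rfl⟩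
    · exact eA_mem_Hyp A hA
    · exact pt3_mem_Hyp
    · exact vv_mem_Hyp i j (fin_ne_of_lt hlt)
  · -- part 3: maximality of the 121-point set
    rintro ⟨y, ⟨hyH, hyS⟩, hfin, hnc⟩
    have hsub : Dset ⊆ distSet (JohnsonRep 9 3 ∪ {pt3} ∪ X93' ∪ {y}) :=
      distSet_S0 ▸ distSet_mono Set.subset_union_left
    have heq : Dset = distSet (JohnsonRep 9 3 ∪ {pt3} ∪ X93' ∪ {y}) :=
      Set.eq_of_subset_of_ncard_le hsub (by rw [hnc, ncard_Dset]) hfin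
    have hkey : ∀ s ∈ JohnsonRep 9 3 ∪ {pt3} ∪ X93', dist y s ∈ Dset := by
      intro s hs
      have hys : y ≠ s := fun h => hyS (h ▸ hs)
      rw [heq]
      exact ⟨y, Set.mem_union_right _ rfl, s, Set.mem_union_left _ hs, hys, rfl⟩
    have hsum : ∑ k, y k = 3 := hyp_sum y hyH
    have hcl := classify' y hsum (fun A hA => (mem_Dset_iff _ _).mp
      (hkey (eA A) (J_subset_S ((mem_J_iff _).mpr ⟨A, hA, rfl⟩))))
    rcases hcl with rfl | ⟨i, j, hij, rfl⟩
    · exact hyS (Set.mem_union_left _ (Set.mem_union_right _ rfl))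
    · have hvalne : (i : ℕ) ≠ (j : ℕ) := fun h => hij (Fin.ext h)
      rcases Nat.lt_or_ge (j : ℕ) (i : ℕ) with hlt | hge
      · exact hyS (Set.mem_union_right _ ((mem_X93'_iff _).mpr ⟨i, j, hlt, rfl⟩))
      · have hlt' : (i : ℕ) < (j : ℕ) := lt_of_le_of_ne hge hvalne
        have hzS : vv j i ∈ JohnsonRep 9 3 ∪ {pt3} ∪ X93' :=
          Set.mem_union_right _ ((mem_X93'_iff _).mpr ⟨j, i, hlt', rfl⟩)
        have := (mem_Dset_iff _ _).mp (hkey (vv j i) hzS)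
        rw [dist_comm, dvv_swap j i (Ne.symm hij)] at this
        simp only [Set.mem_insert_iff, Set.mem_singleton_iff] at this
        norm_num at this
  · -- part 5: every maximal 3-distance set containing J has 121 points
    intro T hJT hTH hsd hmax
    have hDT : Dset = distSet T :=
      Set.eq_of_subset_of_ncard_le (Dset_subset_distSet hJT) (by rw [hsd.2, ncard_Dset]) hsd.1
    have hpair : ∀ s ∈ T, ∀ t ∈ T, s ≠ t → dist s t ∈ Dset := by
      intro s hs t ht hne
      rw [hDT]
      exact ⟨s, hs, t, ht, hne, rfl⟩
    have hchar : ∀ z ∈ T, z ∈ JohnsonRep 9 3 ∨ z = pt3 ∨ ∃ i j : Fin 9, i ≠ j ∧ z = vv i j := by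
      intro z hz
      by_cases hzJ : z ∈ JohnsonRep 9 3
      · exact Or.inl hzJ
      · right
        apply classify' z (hyp_sum z (hTH hz))
        intro A hA
        have hAJ : eA A ∈ JohnsonRep 9 3 := (mem_J_iff _).mpr ⟨A, hA, rfl⟩
        have hne : z ≠ eA A := fun h => hzJ (h ▸ hAJ)
        exact (mem_Dset_iff _ _).mp (hpair z hz (eA A) (hJT hAJ) hne)
    have hnoswap : ∀ i j : Fin 9, i ≠ j → vv i j ∈ T → vv j i ∈ T → False := by
      intro i j hij h1 h2
      have hne : vv i j ≠ vv j i := fun h =>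
        hij (vv_inj i j j i hij (Ne.symm hij) h).1
      have := (mem_Dset_iff _ _).mp (hpair _ h1 _ h2 hne)
      rw [dvv_swap i j hij] at this
      simp only [Set.mem_insert_iff, Set.mem_singleton_iff] at this
      norm_num at this
    have hpt3T : pt3 ∈ T := by
      by_contra hpt
      apply hmax
      refine ⟨pt3, ⟨pt3_mem_Hyp, hpt⟩, ?_⟩
      have hD : distSet (T ∪ {pt3}) = Dset := by
        apply distSet_union_point hDT.symm
        intro t ht htne
        rcases hchar t ht with htJ | rfl | ⟨i, j, hij, rfl⟩
        · obtain ⟨A, hA, rfl⟩ := (mem_J_iff _).mp htJ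
          rw [mem_Dset_iff, dist_comm, dJpt3 A hA]; norm_num
        · exact absurd rfl htne
        · rw [mem_Dset_iff, dpt3v i j hij]; norm_num
      rw [IsSDistanceSet, hD]
      exact ⟨Dset_finite, ncard_Dset⟩
    have horient : ∀ i j : Fin 9, i ≠ j → vv i j ∈ T ∨ vv j i ∈ T := by
      intro i j hij
      by_contra hno
      push_neg at hno
      apply hmax
      refine ⟨vv i j, ⟨vv_mem_Hyp i j hij, hno.1⟩, ?_⟩
      have hD : distSet (T ∪ {vv i j}) = Dset := by
        apply distSet_union_point hDT.symm
        intro t ht htne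
        rcases hchar t ht with htJ | rfl | ⟨i', j', hij', rfl⟩
        · obtain ⟨A, hA, rfl⟩ := (mem_J_iff _).mp htJ
          rw [mem_Dset_iff, dist_comm]
          rw [dJv A hA i j hij]
          by_cases hi : i ∈ A <;> by_cases hj : j ∈ A <;> simp [chi, hi, hj] <;> norm_num
        · rw [mem_Dset_iff, dist_comm, dpt3v i j hij]; norm_num
        · rw [mem_Dset_iff]
          have hnsw : ¬(i = j' ∧ j = i') := by
            rintro ⟨rfl, rfl⟩
            exact hno.2 ht
          exact dvv_mem i j i' j' hij hij' hnsw (fun h => htne h.symm)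
      rw [IsSDistanceSet, hD]
      exact ⟨Dset_finite, ncard_Dset⟩
    -- counting
    classical
    set Pf : Finset (Fin 9 × Fin 9) :=
      (Finset.univ.filter (fun p : Fin 9 × Fin 9 => p.1 ≠ p.2)).filter
        (fun p => vv p.1 p.2 ∈ T) with hPf
    have hPfO : ∀ p ∈ Pf, p.1 ≠ p.2 ∧ vv p.1 p.2 ∈ T := by
      intro p hp
      simp only [hPf, Finset.mem_filter, Finset.mem_univ, true_and] at hp
      exact hp
    have hunion : Pf.image Prod.swap ∪ Pf
        = Finset.univ.filter (fun p : Fin 9 × Fin 9 => p.1 ≠ p.2) := by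
      apply Finset.Subset.antisymm
      · intro p hp
        rcases Finset.mem_union.mp hp with hp | hp
        · obtain ⟨q, hq, rfl⟩ := Finset.mem_image.mp hp
          obtain ⟨hq1, _⟩ := hPfO q hq
          simp only [Finset.mem_filter, Finset.mem_univ, true_and]
          exact fun h => hq1 h.symm
        · obtain ⟨hp1, _⟩ := hPfO p hp
          simp only [Finset.mem_filter, Finset.mem_univ, true_and]
          exact hp1
      · intro p hp
        simp only [Finset.mem_filter, Finset.mem_univ, true_and] at hp
        rcases horient p.1 p.2 hp with h | h
        · exact Finset.mem_union_right _ (by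
            simp only [hPf, Finset.mem_filter, Finset.mem_univ, true_and]
            exact ⟨hp, h⟩)
        · apply Finset.mem_union_left
          apply Finset.mem_image.mpr
          refine ⟨(p.2, p.1), ?_, rfl⟩
          simp only [hPf, Finset.mem_filter, Finset.mem_univ, true_and]
          exact ⟨fun hh => hp hh.symm, h⟩
    have hdisj : Disjoint (Pf.image Prod.swap) Pf := by
      rw [Finset.disjoint_left]
      intro p hp hp2
      obtain ⟨q, hq, hqs⟩ := Finset.mem_image.mp hp
      obtain ⟨hq1, hq2⟩ := hPfO q hq
      obtain ⟨hp1, hp2'⟩ := hPfO p hp2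
      have : p = (q.2, q.1) := hqs ▸ rfl
      rw [this] at hp2'
      exact hnoswap q.1 q.2 hq1 hq2 hp2'
    have hOcard : (Finset.univ.filter (fun p : Fin 9 × Fin 9 => p.1 ≠ p.2)).card = 72 := by
      decide
    have himg : (Pf.image Prod.swap).card = Pf.card :=
      Finset.card_image_of_injective _ Prod.swap_injective
    have hPfcard : Pf.card = 36 := by
      have hcu := Finset.card_union_of_disjoint hdisj
      rw [hunion, hOcard, himg] at hcu
      omega
    have hTeq : T = JohnsonRep 9 3 ∪ {pt3}
        ∪ ((fun p : Fin 9 × Fin 9 => vv p.1 p.2) '' ↑Pf) := by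
      apply Set.Subset.antisymm
      · intro z hz
        rcases hchar z hz with hzJ | rfl | ⟨i, j, hij, rfl⟩
        · exact Set.mem_union_left _ (Set.mem_union_left _ hzJ)
        · exact Set.mem_union_left _ (Set.mem_union_right _ rfl)
        · apply Set.mem_union_right
          refine ⟨(i, j), ?_, rfl⟩
          simp only [Finset.coe_filter, Set.mem_setOf_eq, hPf, Finset.mem_filter,
            Finset.mem_univ, true_and, Finset.mem_coe]
          exact ⟨hij, hz⟩
      · rintro z ((hz | hz) | hz)
        · exact hJT hz
        · exact hz ▸ hpt3T
        · obtain ⟨p, hp, rfl⟩ := hz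
          exact (hPfO p (Finset.mem_coe.mp hp)).2
    rw [hTeq]
    have himage_ncard : ((fun p : Fin 9 × Fin 9 => vv p.1 p.2) '' ↑Pf).ncard = 36 := by
      rw [Set.ncard_image_of_injOn, Set.ncard_coe_finset, hPfcard]
      intro p hp q hq hpq
      have hp' := hPfO p (Finset.mem_coe.mp hp)
      have hq' := hPfO q (Finset.mem_coe.mp hq)
      have := vv_inj p.1 p.2 q.1 q.2 hp'.1 hq'.1 hpq
      exact Prod.ext this.1 this.2
    have hd1 : Disjoint (JohnsonRep 9 3) ({pt3} : Set E9) :=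
      Set.disjoint_singleton_right.mpr pt3_not_mem_J
    have hd2 : Disjoint (JohnsonRep 9 3 ∪ {pt3})
        ((fun p : Fin 9 × Fin 9 => vv p.1 p.2) '' ↑Pf) := by
      rw [Set.disjoint_right]
      rintro z ⟨p, hp, rfl⟩ hz
      have hp' := hPfO p (Finset.mem_coe.mp hp)
      rcases hz with hz | hz
      · exact vv_not_mem_J p.1 p.2 hp'.1 hz
      · exact vv_ne_pt3 p.1 p.2 hz
    rw [Set.ncard_union_eq hd2 (J_finite.union (Set.finite_singleton _))
        ((Set.toFinite _).image _),
      Set.ncard_union_eq hd1 J_finite (Set.finite_singleton _), ncard_J,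
      Set.ncard_singleton, himage_ncard]
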